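/- Let ρ_J, ρ_K ∈ {ρ₁, ρ₂, ρ₃, ρ₁₂, ρ₂₃, ρ₁₂₃} be elements of the torus algebra 𝒜 with ρ_{JK} := ρ_J·ρ_K ≠ 0. Let M be the type-D structure over 𝒜 with basis {w, z, y, x} and δ¹w = ρ_J ⊗ z, δ¹y = 1 ⊗ z + ρ_K ⊗ x, δ¹z = 0, δ¹x = 0, and let M′ be the type-D structure with basis {b, a} and δ¹b = ρ_{JK} ⊗ a, δ¹a = 0. Then M and M′ are homotopy equivalent. -/

import Mathlib

/-- The torus algebra: the 8-dimensional `F₂`-algebra with basis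
`{ι₀, ι₁, ρ₁, ρ₂, ρ₃, ρ₁₂, ρ₂₃, ρ₁₂₃}`, encoded by its full multiplication table. -/
structure TorusAlg (A : Type) [Ring A] [Algebra (ZMod 2) A] where
  i0 : A
  i1 : A
  r1 : A
  r2 : A
  r3 : A
  r12 : A
  r23 : A
  r123 : A
  basis_indep : LinearIndependent (ZMod 2) ![i0, i1, r1, r2, r3, r12, r23, r123]
  basis_span : Submodule.span (ZMod 2)
      ({i0, i1, r1, r2, r3, r12, r23, r123} : Set A) = ⊤
  sum_idem : i0 + i1 = 1
  i0_i0 : i0 * i0 = i0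
  i1_i1 : i1 * i1 = i1
  i0_i1 : i0 * i1 = 0
  i1_i0 : i1 * i0 = 0
  i0_r1 : i0 * r1 = r1
  r1_i1 : r1 * i1 = r1
  i1_r2 : i1 * r2 = r2
  r2_i0 : r2 * i0 = r2
  i0_r3 : i0 * r3 = r3
  r3_i1 : r3 * i1 = r3
  i0_r12 : i0 * r12 = r12
  r12_i0 : r12 * i0 = r12
  i1_r23 : i1 * r23 = r23
  r23_i1 : r23 * i1 = r23
  i0_r123 : i0 * r123 = r123
  r123_i1 : r123 * i1 = r123
  r1_r2 : r1 * r2 = r12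
  r2_r3 : r2 * r3 = r23
  r1_r23 : r1 * r23 = r123
  r12_r3 : r12 * r3 = r123
  r1_r1 : r1 * r1 = 0
  r1_r3 : r1 * r3 = 0
  r1_r12 : r1 * r12 = 0
  r1_r123 : r1 * r123 = 0
  r2_r1 : r2 * r1 = 0
  r2_r2 : r2 * r2 = 0
  r2_r12 : r2 * r12 = 0
  r2_r23 : r2 * r23 = 0
  r2_r123 : r2 * r123 = 0
  r3_r1 : r3 * r1 = 0
  r3_r2 : r3 * r2 = 0
  r3_r3 : r3 * r3 = 0
  r3_r12 : r3 * r12 = 0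
  r3_r23 : r3 * r23 = 0
  r3_r123 : r3 * r123 = 0
  r12_r1 : r12 * r1 = 0
  r12_r2 : r12 * r2 = 0
  r12_r12 : r12 * r12 = 0
  r12_r23 : r12 * r23 = 0
  r12_r123 : r12 * r123 = 0
  r23_r1 : r23 * r1 = 0
  r23_r2 : r23 * r2 = 0
  r23_r3 : r23 * r3 = 0
  r23_r12 : r23 * r12 = 0
  r23_r23 : r23 * r23 = 0
  r23_r123 : r23 * r123 = 0
  r123_r1 : r123 * r1 = 0
  r123_r2 : r123 * r2 = 0
  r123_r3 : r123 * r3 = 0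
  r123_r12 : r123 * r12 = 0
  r123_r23 : r123 * r23 = 0
  r123_r123 : r123 * r123 = 0

variable {A : Type} [Ring A] [Algebra (ZMod 2) A]

/-- Composition of morphisms of type-D structures, in matrix form. -/
def matComp {ι κ σ : Type} [Fintype κ] (F : ι → κ → A) (G : κ → σ → A) :
    ι → σ → A :=
  fun i s => ∑ j, F i j * G j s

/-- The identity morphism, in matrix form. -/
def matId {ι : Type} [DecidableEq ι] : ι → ι → A :=
  fun i j => if i = j then 1 else 0

/-- The differential of a morphism of type-D structures, in matrix form:
`∂F = F · d_N + d_M · F`. -/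
def matDiff {ι κ : Type} [Fintype ι] [Fintype κ]
    (dM : ι → ι → A) (dN : κ → κ → A) (F : ι → κ → A) : ι → κ → A :=
  fun i k => (∑ j, F i j * dN j k) + (∑ j, dM i j * F j k)

/-- The type-D structure equation `(μ ⊗ id) ∘ (id ⊗ δ¹) ∘ δ¹ = 0`, in matrix form. -/
def IsTypeD {ι : Type} [Fintype ι] (d : ι → ι → A) : Prop :=
  ∀ i k, (∑ j, d i j * d j k) = 0

/-- A morphism is a chain map when its differential vanishes. -/
def IsChainMap {ι κ : Type} [Fintype ι] [Fintype κ]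
    (dM : ι → ι → A) (dN : κ → κ → A) (F : ι → κ → A) : Prop :=
  matDiff dM dN F = 0

/-- Homotopy equivalence of two type-D structures, in matrix form:
chain maps `F`, `G` with `G ∘ F + id = ∂H` and `F ∘ G + id = ∂H'`. -/
def HtpyEquiv {ι κ : Type} [Fintype ι] [Fintype κ] [DecidableEq ι] [DecidableEq κ]
    (dM : ι → ι → A) (dN : κ → κ → A) : Prop :=
  ∃ (F : ι → κ → A) (G : κ → ι → A) (H : ι → ι → A) (H' : κ → κ → A),
    IsChainMap dM dN F ∧ IsChainMap dN dM G ∧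
    matComp F G + matId = matDiff dM dM H ∧
    matComp G F + matId = matDiff dN dN H'

/-- Generators of the type-D structure `M`. -/
inductive GM5 | w | z | y | x
deriving DecidableEq

instance : Fintype GM5 :=
  Fintype.ofList [.w, .z, .y, .x] (by intro x; cases x <;> simp)

/-- Generators of the type-D structure `M′`. -/
inductive GN5 | b | a
deriving DecidableEq

instance : Fintype GN5 :=
  Fintype.ofList [.b, .a] (by intro x; cases x <;> simp)

/-- `δ¹w = ρ_J ⊗ z`, `δ¹y = 1 ⊗ z + ρ_K ⊗ x`, `δ¹z = 0`, `δ¹x = 0`. -/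
def dM5 (ρJ ρK : A) : GM5 → GM5 → A
  | .w, .z => ρJ
  | .y, .z => 1
  | .y, .x => ρK
  | _, _ => 0

/-- `δ¹b = ρ_{JK} ⊗ a`, `δ¹a = 0`. -/
def dN5 (ρJ ρK : A) : GN5 → GN5 → A
  | .b, .a => ρJ * ρK
  | _, _ => 0

section Aux
set_option linter.unusedSectionVars false
variable {A : Type} [Ring A] [Algebra (ZMod 2) A]

lemma sumGM5 (f : GM5 → A) : ∑ j, f j = f .w + f .z + f .y + f .x := by
  show f .w + (f .z + (f .y + (f .x + 0))) = _
  simp [add_assoc]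

lemma sumGN5 (f : GN5 → A) : ∑ j, f j = f .b + f .a := by
  show f .b + (f .a + 0) = _
  simp

lemma char2 (x : A) : x + x = 0 := by
  have h : (2 : A) = 0 := by
    rw [show (2 : A) = algebraMap (ZMod 2) A 2 from (map_ofNat _ 2).symm,
      show (2 : ZMod 2) = 0 from rfl, map_zero]
  rw [← two_mul, h, zero_mul]

end Aux

theorem statement5 (A : Type) [Ring A] [Algebra (ZMod 2) A] (T : TorusAlg A)
    (ρJ ρK : A)
    (hJ : ρJ ∈ ({T.r1, T.r2, T.r3, T.r12, T.r23, T.r123} : Set A))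
    (hK : ρK ∈ ({T.r1, T.r2, T.r3, T.r12, T.r23, T.r123} : Set A))
    (hJK : ρJ * ρK ≠ 0) :
    IsTypeD (dM5 ρJ ρK) ∧ IsTypeD (dN5 ρJ ρK) ∧
      HtpyEquiv (dM5 ρJ ρK) (dN5 ρJ ρK) := by
  refine ⟨?_, ?_, ?_⟩
  · intro i k
    cases i <;> cases k <;> simp [sumGM5, dM5]
  · intro i k
    cases i <;> cases k <;> simp [sumGN5, dN5]
  · unfold HtpyEquiv
    refine ⟨(fun i k => match i, k with
        | .w, .b => 1 | .z, .a => ρK | .x, .a => 1 | _, _ => 0),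
      (fun i k => match i, k with
        | .b, .w => 1 | .b, .y => ρJ | .a, .x => 1 | _, _ => 0),
      (fun i k => match i, k with | .z, .y => 1 | _, _ => 0),
      0, ?_, ?_, ?_, ?_⟩
    · funext i k
      cases i <;> cases k <;>
        simp [matDiff, sumGM5, sumGN5, dM5, dN5, char2]
    · funext i k
      cases i <;> cases k <;>
        simp [matDiff, sumGM5, sumGN5, dM5, dN5, char2]
    · funext i k
      cases i <;> cases k <;>
        simp [matDiff, matComp, matId, sumGM5, sumGN5, dM5, dN5, char2]
    · funext i k
      cases i <;> cases k <;>
        simp [matDiff, matComp, matId, sumGM5, sumGN5, dM5, dN5, char2]
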